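/- Let X be a compact metric space and p : X̃ → X a covering map all of whose fibers are finite (a finite-sheeted covering). Then p admits an overlay structure, and any two overlay structures on p are equivalent. -/

import Mathlib

/-- The data exhibiting `p : E → X` as a covering map: an open cover `{U_α}` of `X`,
with `p⁻¹(U_α)` a disjoint union of open sets `U_α^λ` each mapped homeomorphically
onto `U_α` by `p`. -/
structure CoverData {E X : Type} [TopologicalSpace E] [TopologicalSpace X]
    (p : E → X) : Type 1 where
  ι : Type
  base : ι → Set X
  base_open : ∀ a, IsOpen (base a)
  base_cover : ∀ x : X, ∃ a, x ∈ base a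
  Λ : ι → Type
  sheet : ∀ a, Λ a → Set E
  sheet_open : ∀ a l, IsOpen (sheet a l)
  sheet_disjoint : ∀ a, ∀ l l' : Λ a, l ≠ l' → Disjoint (sheet a l) (sheet a l')
  sheet_preimage : ∀ a, p ⁻¹' (base a) = ⋃ l, sheet a l
  sheet_homeo : ∀ a l, ∃ e : (sheet a l) ≃ₜ (base a),
    ∀ z : (sheet a l), (e z : X) = p z



open Set Topology Filter UniformSpace
open scoped Uniformity
open scoped SetRel

namespace CoverData

variable {E X : Type} [TopologicalSpace E] [TopologicalSpace X] {p : E → X}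
  (D : CoverData p)

lemma sheet_subset (a) (l) : D.sheet a l ⊆ p ⁻¹' (D.base a) := by
  rw [D.sheet_preimage a]; exact subset_iUnion (D.sheet a) l

lemma injOn_sheet (a) (l) : Set.InjOn p (D.sheet a l) := by
  obtain ⟨e, he⟩ := D.sheet_homeo a l
  intro w hw w' hw' hpw
  have : e ⟨w, hw⟩ = e ⟨w', hw'⟩ := by
    apply Subtype.ext; rw [he ⟨w, hw⟩, he ⟨w', hw'⟩, hpw]
  have := e.injective this
  exact congrArg Subtype.val this

lemma image_sheet (a) (l) : p '' (D.sheet a l) = D.base a := by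
  obtain ⟨e, he⟩ := D.sheet_homeo a l
  apply subset_antisymm
  · rintro _ ⟨w, hw, rfl⟩; exact D.sheet_subset a l hw
  · intro y hy
    refine ⟨(e.symm ⟨y, hy⟩ : E), (e.symm ⟨y, hy⟩).2, ?_⟩
    have := he (e.symm ⟨y, hy⟩)
    rw [e.apply_symm_apply] at this
    exact this.symm

lemma exists_mem_sheet (a) (l) {x : X} (hx : x ∈ D.base a) :
    ∃ w ∈ D.sheet a l, p w = x := by
  have := (D.image_sheet a l).symm ▸ hx
  obtain ⟨w, hw, hpw⟩ := this
  exact ⟨w, hw, hpw⟩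

/-- images of open subsets of a sheet are open -/
lemma isOpen_image_of_subset_sheet {A : Set E} (a) (l)
    (hA : A ⊆ D.sheet a l) (hAo : IsOpen A) : IsOpen (p '' A) := by
  obtain ⟨e, he⟩ := D.sheet_homeo a l
  have himg : p '' A = Subtype.val '' (e '' (Subtype.val ⁻¹' A)) := by
    ext y; constructor
    · rintro ⟨w, hw, rfl⟩
      exact ⟨e ⟨w, hA hw⟩, ⟨⟨w, hA hw⟩, hw, rfl⟩, he ⟨w, hA hw⟩⟩
    · rintro ⟨_, ⟨⟨w, hwS⟩, hw, rfl⟩, rfl⟩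
      exact ⟨w, hw, (he ⟨w, hwS⟩).symm⟩
  rw [himg]
  exact (D.base_open a).isOpenMap_subtype_val _
    (e.isOpenMap _ (hAo.preimage continuous_subtype_val))

end CoverData

namespace CoverData

variable {E X : Type} [TopologicalSpace E] [TopologicalSpace X] {p : E → X}

lemma finite_Λ (D : CoverData p) (hfin : ∀ x : X, (p ⁻¹' {x}).Finite)
    (a : D.ι) {x : X} (hx : x ∈ D.base a) : Finite (D.Λ a) := by
  have hchoice : ∀ l : D.Λ a, ∃ w, w ∈ D.sheet a l ∧ p w = x := fun l => by
    obtain ⟨w, h1, h2⟩ := D.exists_mem_sheet a l hx; exact ⟨w, h1, h2⟩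
  choose f hf hpf using hchoice
  haveI : Finite ↥(p ⁻¹' {x}) := (hfin x).to_subtype
  refine Finite.of_injective
    (fun l => (⟨f l, by simp [Set.mem_preimage, hpf l]⟩ : ↥(p ⁻¹' {x}))) ?_
  intro l l' h
  by_contra hne
  have hd := D.sheet_disjoint a l l' hne
  have h1 : f l = f l' := congrArg Subtype.val h
  exact (Set.disjoint_left.mp hd (hf l)) (h1 ▸ hf l')

lemma t2 (D : CoverData p) (hcont : Continuous p) [T2Space X] : T2Space E := by
  constructor
  intro w w' hne
  by_cases hp : p w = p w'
  · obtain ⟨a, ha⟩ := D.base_cover (p w)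
    have hw : w ∈ ⋃ l, D.sheet a l := by rw [← D.sheet_preimage]; exact ha
    have hw' : w' ∈ ⋃ l, D.sheet a l := by
      rw [← D.sheet_preimage]; exact Set.mem_preimage.mpr (hp ▸ ha)
    obtain ⟨l, hl⟩ := Set.mem_iUnion.mp hw
    obtain ⟨l', hl'⟩ := Set.mem_iUnion.mp hw'
    have hll : l ≠ l' := by rintro rfl; exact hne (D.injOn_sheet a l hl hl' hp)
    exact ⟨_, _, D.sheet_open a l, D.sheet_open a l', hl, hl',
      D.sheet_disjoint a l l' hll⟩
  · obtain ⟨u, v, hu, hv, hwu, hwv, huv⟩ := t2_separation hp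
    exact ⟨p ⁻¹' u, p ⁻¹' v, hu.preimage hcont, hv.preimage hcont, hwu, hwv,
      huv.preimage p⟩

lemma isCompact_preimage_inter_sheet (D : CoverData p) (a : D.ι) (l : D.Λ a)
    {K : Set X} (hK : IsCompact K) (hKU : K ⊆ D.base a) :
    IsCompact (p ⁻¹' K ∩ D.sheet a l) := by
  obtain ⟨e, he⟩ := D.sheet_homeo a l
  have hset : p ⁻¹' K ∩ D.sheet a l
      = (fun u : (D.base a) => (e.symm u : E)) '' (Subtype.val ⁻¹' K) := by
    ext w; constructor
    · rintro ⟨hwK, hwS⟩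
      refine ⟨e ⟨w, hwS⟩, by rwa [Set.mem_preimage, he ⟨w, hwS⟩], ?_⟩
      simp
    · rintro ⟨u, hu, rfl⟩
      refine ⟨?_, (e.symm u).2⟩
      have := he (e.symm u)
      rw [e.apply_symm_apply] at this
      rw [Set.mem_preimage, ← this]
      exact hu
  rw [hset]
  have hcmp : IsCompact (Subtype.val ⁻¹' K : Set (D.base a)) := by
    rw [Subtype.isCompact_iff]
    have : Subtype.val '' (Subtype.val ⁻¹' K : Set (D.base a)) = K := by
      rw [Subtype.image_preimage_coe, Set.inter_eq_right.mpr hKU]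
    rwa [this]
  exact hcmp.image (continuous_subtype_val.comp e.symm.continuous)

end CoverData

section MetricCompact

variable {E X : Type} [TopologicalSpace E] [MetricSpace X] [CompactSpace X] {p : E → X}

lemma CoverData.compactSpaceE (D : CoverData p)
    (hfin : ∀ x : X, (p ⁻¹' {x}).Finite) : CompactSpace E := by
  obtain ⟨δ, hδ, hLeb⟩ := lebesgue_number_lemma_of_metric isCompact_univ D.base_open
    (fun x _ => Set.mem_iUnion.mpr (D.base_cover x))
  choose a ha using fun x : X => hLeb x (Set.mem_univ x)
  obtain ⟨t, ht⟩ := isCompact_univ.elim_finite_subcover (fun x : X => Metric.ball x (δ/2))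
    (fun x => Metric.isOpen_ball)
    (fun x _ => Set.mem_iUnion.mpr ⟨x, Metric.mem_ball_self (by linarith)⟩)
  haveI hΛ : ∀ x : X, Finite (D.Λ (a x)) := fun x =>
    D.finite_Λ hfin (a x) (ha x (Metric.mem_ball_self hδ))
  rw [← isCompact_univ_iff]
  have hcb : ∀ x : X, Metric.closedBall x (δ/2) ⊆ D.base (a x) := fun x =>
    (Metric.closedBall_subset_ball (by linarith)).trans (ha x)
  have hcover : (Set.univ : Set E) ⊆
      ⋃ x ∈ t, ⋃ l : D.Λ (a x), p ⁻¹' (Metric.closedBall x (δ/2)) ∩ D.sheet (a x) l := by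
    intro w _
    obtain ⟨x, hxt, hwx⟩ := Set.mem_iUnion₂.mp (ht (Set.mem_univ (p w)))
    have hwb : w ∈ p ⁻¹' (D.base (a x)) :=
      (Metric.ball_subset_ball (by linarith)).trans (ha x) hwx
    rw [D.sheet_preimage] at hwb
    obtain ⟨l, hl⟩ := Set.mem_iUnion.mp hwb
    exact Set.mem_iUnion₂.mpr ⟨x, hxt,
      Set.mem_iUnion.mpr ⟨l, ⟨Metric.ball_subset_closedBall hwx, hl⟩⟩⟩
  refine IsCompact.of_isClosed_subset ?_ isClosed_univ hcover
  · refine t.finite_toSet.isCompact_biUnion (fun x _ => isCompact_iUnion (fun l => ?_))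
    exact D.isCompact_preimage_inter_sheet (a x) l
      (Metric.isClosed_closedBall.isCompact) (hcb x)

end MetricCompact


-- OverlayStructure helpers
/-- An overlay structure on a covering map: an indexed cover `{U_α^λ}` of the total
space lying over an open cover of the base, such that whenever `U_α^λ ∩ U_β^μ ≠ ∅`
and `U_α^λ ∩ U_β^ν ≠ ∅` one has `μ = ν`. -/
structure OverlayStructure {E X : Type} [TopologicalSpace E] [TopologicalSpace X]
    (p : E → X) extends CoverData p : Type 1 where
  overlay : ∀ a b (l : Λ a) (μ ν : Λ b),
    (sheet a l ∩ sheet b μ).Nonempty → (sheet a l ∩ sheet b ν).Nonempty → μ = ν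

/-- `O` refines `O'` (as covers of the total space) if every sheet of `O` is
contained in some sheet of `O'`. -/
def OverlayStructure.Refines {E X : Type} [TopologicalSpace E] [TopologicalSpace X]
    {p : E → X} (O O' : OverlayStructure p) : Prop :=
  ∀ a l, ∃ b m, O.sheet a l ⊆ O'.sheet b m

/-- Two overlay structures on `p` are equivalent if some overlay structure on `p`
refines both of them. -/
def OverlayStructure.Equiv {E X : Type} [TopologicalSpace E] [TopologicalSpace X]
    {p : E → X} (O O' : OverlayStructure p) : Prop :=
  ∃ O'' : OverlayStructure p, O''.Refines O ∧ O''.Refines O'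

section Main

theorem left_subset_compRel {α : Type*} {s t : SetRel α α} (h : SetRel.id ⊆ t) :
    s ⊆ s ○ t := fun ⟨_, b⟩ hab => ⟨b, hab, h rfl⟩

variable {E X : Type} [TopologicalSpace E] [MetricSpace X] [CompactSpace X] {p : E → X}

lemma exists_overlay_refining (hcont : Continuous p) (hsurj : Function.Surjective p)
    (hfin : ∀ x : X, (p ⁻¹' {x}).Finite) (D1 D2 : CoverData p) :
    ∃ O : OverlayStructure p,
      (∀ a l, ∃ b m, O.sheet a l ⊆ D1.sheet b m) ∧
      (∀ a l, ∃ b m, O.sheet a l ⊆ D2.sheet b m) := by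
  by_cases hX : Nonempty X
  case neg =>
    haveI : IsEmpty X := not_nonempty_iff.mp hX
    exact ⟨⟨⟨PUnit, fun _ => ∅, fun _ => isOpen_empty, fun x => (IsEmpty.false x).elim,
      fun _ => PEmpty, fun _ l => l.elim, fun _ l => l.elim, fun _ l => l.elim,
      fun _ => by simp, fun _ l => l.elim⟩, fun a b l => l.elim⟩,
      fun a l => l.elim, fun a l => l.elim⟩
  case pos =>
    haveI := D1.compactSpaceE hfin
    haveI := D1.t2 hcont
    letI : UniformSpace E := uniformSpaceOfCompactR1
    obtain ⟨x0⟩ := hX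
    obtain ⟨e0, -⟩ := hsurj x0
    haveI : Nonempty E := ⟨e0⟩
    have hcoverE : ∀ (D : CoverData p),
        (Set.univ : Set E) ⊆ ⋃ q : Σ a : D.ι, D.Λ a, D.sheet q.1 q.2 := by
      intro D w _
      obtain ⟨a, ha⟩ := D.base_cover (p w)
      have : w ∈ ⋃ l, D.sheet a l := by rw [← D.sheet_preimage]; exact ha
      obtain ⟨l, hl⟩ := Set.mem_iUnion.mp this
      exact Set.mem_iUnion.mpr ⟨⟨a, l⟩, hl⟩
    obtain ⟨W1, hW1, hW1sheet⟩ := lebesgue_number_lemma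
      (U := fun q : Σ a : D1.ι, D1.Λ a => D1.sheet q.1 q.2) (isCompact_univ (X := E))
      (fun q => D1.sheet_open q.1 q.2) (hcoverE D1)
    obtain ⟨W2, hW2, hW2sheet⟩ := lebesgue_number_lemma
      (U := fun q : Σ a : D2.ι, D2.Λ a => D2.sheet q.1 q.2) (isCompact_univ (X := E))
      (fun q => D2.sheet_open q.1 q.2) (hcoverE D2)
    have hUsep : {q : E × E | p q.1 = p q.2 ∧ q.1 ≠ q.2}ᶜ ∈ 𝓤 E := by
      rw [← nhdsSet_diagonal_eq_uniformity, mem_nhdsSet_iff_exists]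
      refine ⟨⋃ q : Σ a : D1.ι, D1.Λ a, D1.sheet q.1 q.2 ×ˢ D1.sheet q.1 q.2,
        isOpen_iUnion (fun q => (D1.sheet_open _ _).prod (D1.sheet_open _ _)), ?_, ?_⟩
      · rintro ⟨w, w'⟩ (rfl : w = w')
        obtain ⟨q, hq⟩ := Set.mem_iUnion.mp (hcoverE D1 (Set.mem_univ w))
        exact Set.mem_iUnion.mpr ⟨q, ⟨hq, hq⟩⟩
      · rintro ⟨w, w'⟩ hww
        obtain ⟨q, hq1, hq2⟩ := Set.mem_iUnion.mp hww
        simp only [Set.mem_compl_iff, Set.mem_setOf_eq, not_and, not_not]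
        exact fun hp => D1.injOn_sheet q.1 q.2 hq1 hq2 hp
    set T : Set (E × E) := W1 ∩ (W2 ∩ {q : E × E | p q.1 = p q.2 ∧ q.1 ≠ q.2}ᶜ) with hT
    have hTmem : T ∈ 𝓤 E := Filter.inter_mem hW1 (Filter.inter_mem hW2 hUsep)
    obtain ⟨V₀, hV₀, hV₀T⟩ := comp_mem_uniformity_sets hTmem
    obtain ⟨V, hV, hVo, hVsymm, hVV₀⟩ := comp_open_symm_mem_uniformity_sets hV₀
    have hV4 : V ○ V ○ V ○ V ⊆ T := by
      calc V ○ V ○ V ○ V = (V ○ V) ○ (V ○ V) := by rw [SetRel.comp_assoc]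
      _ ⊆ V₀ ○ V₀ := SetRel.comp_subset_comp hVV₀ hVV₀
      _ ⊆ T := hV₀T
    have hVsub : V ⊆ T := by
      refine Set.Subset.trans ?_ hV4
      have h1 : SetRel.id ⊆ V := refl_le_uniformity hV
      exact (left_subset_compRel h1).trans ((left_subset_compRel h1).trans
        (left_subset_compRel h1))
    have hsep : ∀ w w' : E, p w = p w' → (w, w') ∈ V ○ V ○ V ○ V → w = w' := by
      intro w w' hp h
      by_contra hne
      exact (hV4 h).2.2 ⟨hp, hne⟩
    have hVsheet1 : ∀ z : E, ∃ a l, ball z V ⊆ D1.sheet a l := by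
      intro z
      obtain ⟨q, hq⟩ := hW1sheet z (Set.mem_univ z)
      exact ⟨q.1, q.2, (ball_mono (fun y hy => (hVsub hy).1) z).trans hq⟩
    have hVsheet2 : ∀ z : E, ∃ a l, ball z V ⊆ D2.sheet a l := by
      intro z
      obtain ⟨q, hq⟩ := hW2sheet z (Set.mem_univ z)
      exact ⟨q.1, q.2, (ball_mono (fun y hy => (hVsub hy).2.1) z).trans hq⟩
    obtain ⟨V₂, hV₂, hV₂o, hV₂symm, hV₂V⟩ := comp_open_symm_mem_uniformity_sets hV
    have hV₂sub : V₂ ⊆ V := (left_subset_compRel (refl_le_uniformity hV₂)).trans hV₂V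
    have hz : ∀ z : E, ∃ rz > 0, Metric.ball (p z) rz ⊆ p '' (ball z V₂) := by
      intro z
      obtain ⟨a, l, hsheet⟩ := hVsheet1 z
      have hop : IsOpen (p '' (ball z V₂)) :=
        D1.isOpen_image_of_subset_sheet a l ((ball_mono hV₂sub z).trans hsheet)
          (isOpen_ball z hV₂o)
      have hmem : p z ∈ p '' (ball z V₂) := ⟨z, mem_ball_self z hV₂, rfl⟩
      obtain ⟨rr, hrr, hball⟩ := Metric.isOpen_iff.mp hop _ hmem
      exact ⟨rr, hrr, hball⟩
    choose rz hrz hrzball using hz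
    have hOz : ∀ z z' : E, z' ∈ ball z V₂ → dist (p z') (p z) < rz z / 2 →
        Metric.ball (p z') (rz z / 2) ⊆ p '' (ball z' V) := by
      intro z z' hz' hd y hy
      have hyz : y ∈ Metric.ball (p z) (rz z) := by
        have h1 : dist y (p z') < rz z / 2 := Metric.mem_ball.mp hy
        exact Metric.mem_ball.mpr (lt_of_le_of_lt (dist_triangle y (p z') (p z))
          (by linarith))
      obtain ⟨u, hu, hpu⟩ := hrzball z hyz
      refine ⟨u, ?_, hpu⟩
      have h1 : (z', z) ∈ V₂ := hV₂symm.symm _ _ hz'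
      exact hV₂V (SetRel.prodMk_mem_comp h1 hu)
    have hEcover : (Set.univ : Set E) ⊆
        ⋃ z : E, (ball z V₂ ∩ p ⁻¹' (Metric.ball (p z) (rz z / 2))) :=
      fun w _ => Set.mem_iUnion.mpr ⟨w, mem_ball_self w hV₂,
        Metric.mem_ball_self (by linarith [hrz w])⟩
    obtain ⟨t, ht⟩ := isCompact_univ.elim_finite_subcover _
      (fun z => (isOpen_ball z hV₂o).inter (Metric.isOpen_ball.preimage hcont)) hEcover
    have htne : t.Nonempty := by
      obtain ⟨z, hzt, -⟩ := Set.mem_iUnion₂.mp (ht (Set.mem_univ e0))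
      exact ⟨z, hzt⟩
    set r : ℝ := t.inf' htne (fun z => rz z / 2) with hrdef
    have hrpos : 0 < r := by
      rw [hrdef, Finset.lt_inf'_iff]
      exact fun z _ => by linarith [hrz z]
    have hrkey : ∀ w : E, Metric.ball (p w) r ⊆ p '' (ball w V) := by
      intro w
      obtain ⟨z, hzt, hw⟩ := Set.mem_iUnion₂.mp (ht (Set.mem_univ w))
      refine (Metric.ball_subset_ball ?_).trans
        (hOz z w hw.1 (Metric.mem_ball.mp hw.2))
      exact Finset.inf'_le _ hzt
    -- now the construction
    have hpre : ∀ x : X, p ⁻¹' (Metric.ball x r)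
        = ⋃ z : ↥(p ⁻¹' {x}), (ball (z : E) V ∩ p ⁻¹' (Metric.ball x r)) := by
      intro x
      apply subset_antisymm
      · intro w hw
        have hx : x ∈ Metric.ball (p w) r := by
          rw [Metric.mem_ball, dist_comm]; exact Metric.mem_ball.mp hw
        obtain ⟨u, hu, hpu⟩ := hrkey w hx
        refine Set.mem_iUnion.mpr ⟨⟨u, by simp [hpu]⟩, ?_, hw⟩
        exact hVsymm.symm _ _ hu
      · exact Set.iUnion_subset (fun z => Set.inter_subset_right)
    have hdis : ∀ (x : X) (z z' : ↥(p ⁻¹' {x})), z ≠ z' →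
        Disjoint (ball (z : E) V ∩ p ⁻¹' (Metric.ball x r))
          (ball (z' : E) V ∩ p ⁻¹' (Metric.ball x r)) := by
      intro x z z' hne
      rw [Set.disjoint_left]
      rintro u ⟨hu1, -⟩ ⟨hu2, -⟩
      apply hne
      apply Subtype.ext
      have hp : p (z : E) = p (z' : E) := by
        have h1 : p (z : E) = x := z.2
        have h2 : p (z' : E) = x := z'.2
        rw [h1, h2]
      refine hsep _ _ hp ?_
      have h1 : (u, (z' : E)) ∈ V := hVsymm.symm _ _ hu2
      have h2 : ((z : E), (z' : E)) ∈ V ○ V := SetRel.prodMk_mem_comp hu1 h1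
      have hid : SetRel.id ⊆ V := refl_le_uniformity hV
      exact (left_subset_compRel hid) ((left_subset_compRel hid) h2)
    have hhomeo : ∀ (x : X) (z : ↥(p ⁻¹' {x})),
        ∃ e : ↥(ball (z : E) V ∩ p ⁻¹' (Metric.ball x r)) ≃ₜ ↥(Metric.ball x r),
          ∀ w : ↥(ball (z : E) V ∩ p ⁻¹' (Metric.ball x r)), (e w : X) = p w := by
      intro x z
      have hzx : p (z : E) = x := z.2
      obtain ⟨a, l, hball⟩ := hVsheet1 (z : E)
      obtain ⟨e, he⟩ := D1.sheet_homeo a l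
      have hsub : (ball (z : E) V ∩ p ⁻¹' (Metric.ball x r)) ⊆ D1.sheet a l :=
        fun w hw => hball hw.1
      have hsurjb : ∀ y ∈ Metric.ball x r,
          ∃ w ∈ ball (z : E) V ∩ p ⁻¹' (Metric.ball x r), p w = y := by
        intro y hy
        have hy' : y ∈ Metric.ball (p (z : E)) r := by rwa [hzx]
        obtain ⟨u, hu, hpu⟩ := hrkey (z : E) hy'
        exact ⟨u, ⟨hu, by rw [Set.mem_preimage, hpu]; exact hy⟩, hpu⟩
      have hBsub : Metric.ball x r ⊆ D1.base a := by
        intro y hy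
        obtain ⟨w, hw, hpw⟩ := hsurjb y hy
        exact hpw ▸ (D1.sheet_subset a l (hsub hw))
      have hsymm_mem : ∀ (y : ↥(Metric.ball x r)),
          (e.symm ⟨(y : X), hBsub y.2⟩ : E) ∈
            ball (z : E) V ∩ p ⁻¹' (Metric.ball x r) := by
        intro y
        obtain ⟨w, hw, hpw⟩ := hsurjb y y.2
        have hwe : e ⟨w, hsub hw⟩ = ⟨(y : X), hBsub y.2⟩ :=
          Subtype.ext (by rw [he ⟨w, hsub hw⟩]; exact hpw)
        have hsymm : e.symm ⟨(y : X), hBsub y.2⟩ = ⟨w, hsub hw⟩ := by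
          rw [← hwe, Homeomorph.symm_apply_apply]
        rw [hsymm]; exact hw
      refine ⟨⟨⟨fun w => ⟨p (w : E), w.2.2⟩,
        fun y => ⟨(e.symm ⟨(y : X), hBsub y.2⟩ : E), hsymm_mem y⟩, ?_, ?_⟩, ?_, ?_⟩,
        fun w => rfl⟩
      · intro w
        apply Subtype.ext
        have hwe : e ⟨(w : E), hsub w.2⟩ = ⟨p (w : E), hBsub w.2.2⟩ :=
          Subtype.ext (he _)
        show (e.symm ⟨p (w : E), hBsub w.2.2⟩ : E) = (w : E)
        rw [← hwe, Homeomorph.symm_apply_apply]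
      · intro y
        apply Subtype.ext
        show p ((e.symm ⟨(y : X), hBsub y.2⟩ : E)) = (y : X)
        have h2 := he (e.symm ⟨(y : X), hBsub y.2⟩)
        rw [Homeomorph.apply_symm_apply] at h2
        exact h2.symm
      · exact Continuous.subtype_mk (hcont.comp continuous_subtype_val) _
      · exact Continuous.subtype_mk (continuous_subtype_val.comp
          (e.symm.continuous.comp (Continuous.subtype_mk continuous_subtype_val _))) _
    have hov : ∀ (x y : X) (z : ↥(p ⁻¹' {x})) (w w' : ↥(p ⁻¹' {y})),
        ((ball (z : E) V ∩ p ⁻¹' (Metric.ball x r)) ∩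
          (ball (w : E) V ∩ p ⁻¹' (Metric.ball y r))).Nonempty →
        ((ball (z : E) V ∩ p ⁻¹' (Metric.ball x r)) ∩
          (ball (w' : E) V ∩ p ⁻¹' (Metric.ball y r))).Nonempty → w = w' := by
      rintro x y z w w' ⟨u, ⟨hu1, -⟩, ⟨hu2, -⟩⟩ ⟨v, ⟨hv1, -⟩, ⟨hv2, -⟩⟩
      apply Subtype.ext
      have hp : p (w : E) = p (w' : E) := by
        have h1 : p (w : E) = y := w.2
        have h2 : p (w' : E) = y := w'.2
        rw [h1, h2]
      refine hsep _ _ hp ?_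
      have h1 : ((w : E), u) ∈ V := hu2
      have h2 : (u, (z : E)) ∈ V := hVsymm.symm _ _ hu1
      have h3 : ((z : E), v) ∈ V := hv1
      have h4 : (v, (w' : E)) ∈ V := hVsymm.symm _ _ hv2
      exact SetRel.prodMk_mem_comp (SetRel.prodMk_mem_comp (SetRel.prodMk_mem_comp h1 h2) h3) h4
    refine ⟨⟨⟨X, fun x => Metric.ball x r, fun x => Metric.isOpen_ball,
      fun x => ⟨x, Metric.mem_ball_self hrpos⟩,
      fun x => ↥(p ⁻¹' {x}),
      fun x z => ball (z : E) V ∩ p ⁻¹' (Metric.ball x r),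
      fun x z => (isOpen_ball _ hVo).inter (Metric.isOpen_ball.preimage hcont),
      hdis, hpre, hhomeo⟩, hov⟩, ?_, ?_⟩
    · intro x z
      obtain ⟨a, l, h⟩ := hVsheet1 (z : E)
      exact ⟨a, l, Set.inter_subset_left.trans h⟩
    · intro x z
      obtain ⟨a, l, h⟩ := hVsheet2 (z : E)
      exact ⟨a, l, Set.inter_subset_left.trans h⟩

end Main

/-- Over a compact metric space, every finite-sheeted covering map admits an
overlay structure, and any two overlay structures on it are equivalent. -/
theorem overlayStructure_exists_unique_of_finite_fibers
    {E X : Type} [TopologicalSpace E] [MetricSpace X] [CompactSpace X]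
    (p : E → X) (hcont : Continuous p) (hsurj : Function.Surjective p)
    (hcov : Nonempty (CoverData p))
    (hfin : ∀ x : X, (p ⁻¹' {x}).Finite) :
    Nonempty (OverlayStructure p) ∧
      ∀ O O' : OverlayStructure p, O.Equiv O' := by
  obtain ⟨D⟩ := hcov
  constructor
  · obtain ⟨O, -, -⟩ := exists_overlay_refining hcont hsurj hfin D D
    exact ⟨O⟩
  · intro O O'
    obtain ⟨O'', h1, h2⟩ :=
      exists_overlay_refining hcont hsurj hfin O.toCoverData O'.toCoverData
    exact ⟨O'', h1, h2⟩
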